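/- Let b = 2^e·p where e ∈ {0,1,2,3} and p is an odd prime, and let a₁, a₂ be positive integers coprime to b. Then s(a₁,b) = s(a₂,b) if and only if a₁ ≡ a₂ (mod b) or a₁·a₂ ≡ 1 (mod b). -/

import Mathlib

/-- The sawtooth function ((x)) = x - ⌊x⌋ - 1/2 for non-integer x, and 0 for integer x. -/
def saw (x : ℚ) : ℚ := if x.den = 1 then 0 else x - ⌊x⌋ - 1/2

lemma den_one_iff (x : ℚ) : x.den = 1 ↔ ∃ n : ℤ, x = n :=
  ⟨fun h => ⟨x.num, (Rat.coe_int_num_of_den_eq_one h).symm⟩,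
   fun ⟨n, hn⟩ => hn ▸ Rat.den_intCast n⟩

lemma saw_add_int (x : ℚ) (n : ℤ) : saw (x + n) = saw x := by
  unfold saw
  have hden : (x + n).den = 1 ↔ x.den = 1 := by
    rw [den_one_iff, den_one_iff]
    constructor
    · rintro ⟨m, hm⟩; exact ⟨m - n, by push_cast; linarith⟩
    · rintro ⟨m, hm⟩; exact ⟨m + n, by push_cast; linarith⟩
  by_cases h : x.den = 1
  · simp [h, hden.mpr h]
  · rw [if_neg h, if_neg (fun hh => h (hden.mp hh)), Int.floor_add_intCast]
    push_cast; ring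

lemma saw_eq_of_sub_int (x y : ℚ) (n : ℤ) (h : x - y = n) : saw x = saw y := by
  have : x = y + n := by linarith
  rw [this, saw_add_int]

lemma saw_frac (b r : ℕ) (h1 : 0 < r) (h2 : r < b) :
    saw ((r : ℚ) / b) = (r : ℚ) / b - 1/2 := by
  have hb : (0:ℚ) < b := by exact_mod_cast h1.trans h2
  have hx0 : (0:ℚ) < (r:ℚ)/b := div_pos (by exact_mod_cast h1) hb
  have hx1 : (r:ℚ)/b < 1 := (div_lt_one hb).mpr (by exact_mod_cast h2)
  have hden : ((r:ℚ)/b).den ≠ 1 := by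
    intro hh
    obtain ⟨m, hm⟩ := (den_one_iff _).mp hh
    rw [hm] at hx0 hx1
    have : (0:ℤ) < m := by exact_mod_cast hx0
    have : m < 1 := by exact_mod_cast hx1
    omega
  have hfl : ⌊(r:ℚ)/b⌋ = 0 := Int.floor_eq_zero_iff.mpr ⟨le_of_lt hx0, hx1⟩
  rw [saw, if_neg hden, hfl]
  push_cast; ring

lemma saw_natMod (b m : ℕ) (hb : 0 < b) :
    saw ((m : ℚ) / b) = saw (((m % b : ℕ) : ℚ) / b) := by
  apply saw_eq_of_sub_int _ _ (m / b : ℕ)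
  have hbq : (b:ℚ) ≠ 0 := by positivity
  have key : (m:ℚ) = b * ((m / b : ℕ) : ℚ) + ((m % b : ℕ) : ℚ) := by
    exact_mod_cast (Nat.div_add_mod m b).symm
  rw [key]
  field_simp
  norm_cast
  rw [Int.subNatNat_eq_coe]; push_cast; ring

lemma saw_natCongr (b m m' : ℕ) (hb : 0 < b) (h : m ≡ m' [MOD b]) :
    saw ((m : ℚ) / b) = saw ((m' : ℚ) / b) := by
  rw [saw_natMod b m hb, saw_natMod b m' hb, h]

lemma sum_mulMod {M : Type*} [AddCommMonoid M] (f : ℕ → M) (a b : ℕ) (hb : 1 < b)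
    (h : Nat.Coprime a b) :
    ∑ k ∈ Finset.range b, f (k * a % b) = ∑ k ∈ Finset.range b, f k := by
  obtain ⟨c, -, hc⟩ := Nat.exists_mul_mod_eq_one_of_coprime h hb
  apply Finset.sum_nbij' (i := fun k => k * a % b) (j := fun k => k * c % b)
  · intro k hk
    exact Finset.mem_range.mpr (Nat.mod_lt _ (by omega))
  · intro k hk
    exact Finset.mem_range.mpr (Nat.mod_lt _ (by omega))
  · intro k hk
    have hk' : k < b := Finset.mem_range.mp hk
    calc k * a % b * c % b = k * a * c % b := Nat.mod_mul_mod _ _ _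
    _ = k * (a * c) % b := by ring_nf
    _ = k % b * (a * c % b) % b := (Nat.mul_mod _ _ _)
    _ = k := by rw [hc, Nat.mod_eq_of_lt hk']; simp [Nat.mod_eq_of_lt hk']
  · intro k hk
    have hk' : k < b := Finset.mem_range.mp hk
    calc k * c % b * a % b = k * c * a % b := Nat.mod_mul_mod _ _ _
    _ = k * (a * c) % b := by ring_nf
    _ = k % b * (a * c % b) % b := (Nat.mul_mod _ _ _)
    _ = k := by rw [hc, Nat.mod_eq_of_lt hk']; simp [Nat.mod_eq_of_lt hk']
  · intro k hk; rfl

/-- The Dedekind sum s(a,b) = Σ_{k=1}^{b-1} ((k/b))((ka/b)). -/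
def dedekindSum (a b : ℕ) : ℚ :=
  ∑ k ∈ Finset.range b, saw ((k : ℚ) / b) * saw ((k * a : ℚ) / b)

/-- I(a,b): the number of inversions of the permutation x ↦ ax mod b on {0,...,b-1}. -/
def inv' (a b : ℕ) : ℕ :=
  (((Finset.range b) ×ˢ (Finset.range b)).filter
    (fun p => p.1 < p.2 ∧ (a * p.2) % b < (a * p.1) % b)).card

lemma sum_range_id' (n : ℕ) : 2 * ∑ i ∈ Finset.range n, (i:ℤ) = n * (n - 1) := by
  induction n with
  | zero => simp
  | succ m ih => rw [Finset.sum_range_succ]; push_cast; push_cast at ih; ring_nf; ring_nf at ih; linarith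

lemma sum_range_sq' (n : ℕ) : 6 * ∑ i ∈ Finset.range n, (i:ℤ)^2 = n * (n - 1) * (2*n - 1) := by
  induction n with
  | zero => simp
  | succ m ih => rw [Finset.sum_range_succ]; push_cast; push_cast at ih; ring_nf; ring_nf at ih; linarith

lemma master (a b : ℕ) (hb : 1 < b) (h : Nat.Coprime a b) :
    12 * (a:ℚ) * b * dedekindSum a b
      = ((a:ℚ)^2 + 1) * ((b:ℚ) - 1) * (2*(b:ℚ) - 1) - 3*(a:ℚ)*(b:ℚ)*((b:ℚ)-1)
        - 6*(b:ℚ) * ∑ k ∈ Finset.range b, (((k * a / b : ℕ)):ℚ)^2 := by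
  have hb0 : (0:ℚ) < b := by exact_mod_cast Nat.lt_of_lt_of_le Nat.zero_lt_one hb.le
  have hbne : (b:ℚ) ≠ 0 := ne_of_gt hb0
  -- R and Q
  set R : ℕ → ℕ := fun k => k * a % b with hRdef
  set Q : ℕ → ℕ := fun k => k * a / b with hQdef
  -- the modified summand
  set G : ℕ → ℚ := fun k => ((k:ℚ)/b - 1/2) * ((R k : ℚ)/b - 1/2) with hGdef
  have hR_pos : ∀ k, 0 < k → k < b → 0 < R k := by
    intro k hk0 hkb
    rcases Nat.eq_zero_or_pos (R k) with h0 | h0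
    · exfalso
      have hdvd : b ∣ k * a := Nat.dvd_of_mod_eq_zero h0
      have hd : b ∣ k := (Nat.Coprime.dvd_of_dvd_mul_right (Nat.Coprime.symm h) hdvd)
      exact absurd (Nat.le_of_dvd hk0 hd) (by omega)
    · exact h0
  have hterm : ∀ k ∈ Finset.range b, k ≠ 0 →
      saw ((k:ℚ)/b) * saw (((k:ℚ) * a)/b) = G k := by
    intro k hk hk0
    have hkb : k < b := Finset.mem_range.mp hk
    have h1 : saw ((k:ℚ)/b) = (k:ℚ)/b - 1/2 := saw_frac b k (Nat.pos_of_ne_zero hk0) hkb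
    have hcast : ((k:ℚ) * a) = ((k*a : ℕ) : ℚ) := by push_cast; ring
    have h2 : saw (((k:ℚ) * a)/b) = ((R k : ℚ)/b - 1/2) := by
      rw [hcast, saw_natMod b (k*a) (by omega)]
      exact saw_frac b (R k) (hR_pos k (Nat.pos_of_ne_zero hk0) hkb) (Nat.mod_lt _ (by omega))
    rw [h1, h2]
  have hzero : (0:ℕ) ∈ Finset.range b := Finset.mem_range.mpr (by omega)
  have hsum : dedekindSum a b = (∑ k ∈ Finset.range b, G k) - 1/4 := by
    rw [dedekindSum, ← Finset.add_sum_erase _ _ hzero, ← Finset.add_sum_erase _ G hzero]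
    have hG0 : G 0 = 1/4 := by
      simp only [hGdef, hRdef]
      norm_num
    have : saw (((0:ℕ):ℚ)/b) * saw ((((0:ℕ):ℚ) * a)/b) = 0 := by
      have : ((0:ℕ):ℚ)/b = 0 := by norm_num
      rw [this]
      have : saw 0 = 0 := by norm_num [saw]
      rw [this, zero_mul]
    rw [this, hG0]
    rw [Finset.sum_congr rfl (fun k hk => hterm k (Finset.mem_of_mem_erase hk)
      (Finset.ne_of_mem_erase hk))]
    ring
  -- integer sums
  set K1 : ℤ := ∑ k ∈ Finset.range b, (k:ℤ) with hK1
  set K2 : ℤ := ∑ k ∈ Finset.range b, (k:ℤ)^2 with hK2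
  set SQ : ℤ := ∑ k ∈ Finset.range b, (Q k : ℤ) with hSQ
  set SQ2 : ℤ := ∑ k ∈ Finset.range b, (Q k : ℤ)^2 with hSQ2
  set SKQ : ℤ := ∑ k ∈ Finset.range b, (k:ℤ)*(Q k : ℤ) with hSKQ
  set T : ℤ := ∑ k ∈ Finset.range b, (2*(k:ℤ) - b)*(2*(R k : ℤ) - b) with hT
  have fA3 : ∀ k, (R k : ℤ) = k*a - b * Q k := by
    intro k
    have h2 : (b:ℤ) * ((k*a/b : ℕ) : ℤ) + ((k*a % b : ℕ) : ℤ) = ((k*a : ℕ) : ℤ) := by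
      exact_mod_cast congrArg (Nat.cast : ℕ → ℤ) (Nat.div_add_mod (k*a) b)
    simp only [hRdef, hQdef]
    push_cast at h2 ⊢
    linarith
  have fA1 : ∑ k ∈ Finset.range b, (R k : ℤ) = K1 := by
    simpa [hRdef] using sum_mulMod (fun m => ((m % b : ℕ) : ℤ)) a b hb h |>.trans
      (Finset.sum_congr rfl (fun k hk => by rw [Nat.mod_eq_of_lt (Finset.mem_range.mp hk)]))
  have fA2 : ∑ k ∈ Finset.range b, (R k : ℤ)^2 = K2 := by
    simpa [hRdef] using sum_mulMod (fun m => ((m % b : ℕ) : ℤ)^2) a b hb h |>.trans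
      (Finset.sum_congr rfl (fun k hk => by rw [Nat.mod_eq_of_lt (Finset.mem_range.mp hk)]))
  have fc1 : 2 * K1 = b * (b - 1) := sum_range_id' b
  have fc2 : 6 * K2 = b * (b-1) * (2*b - 1) := sum_range_sq' b
  have fc3 : b * SQ = a * K1 - K1 := by
    have e1 : K1 = a * K1 - b * SQ := by
      conv_lhs => rw [← fA1, Finset.sum_congr rfl (fun k _ => fA3 k)]
      rw [Finset.sum_sub_distrib, ← Finset.mul_sum, ← Finset.sum_mul, hK1, hSQ]
      ring
    linarith
  have fc4 : a^2*K2 - 2*a*b*SKQ + b^2*SQ2 = K2 := by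
    have : K2 = ∑ k ∈ Finset.range b, ((k:ℤ)*a - b * Q k)^2 := by
      rw [← fA2]; exact Finset.sum_congr rfl (fun k _ => by rw [fA3 k])
    have expand : ∑ k ∈ Finset.range b, ((k:ℤ)*a - b * Q k)^2
        = a^2*K2 - 2*a*b*SKQ + b^2*SQ2 := by
      simp only [hK2, hSKQ, hSQ2, Finset.mul_sum, ← Finset.sum_sub_distrib,
        ← Finset.sum_add_distrib]
      exact Finset.sum_congr rfl (fun k _ => by ring)
    conv_rhs => rw [this, expand]
  have fc5 : T = 4*a*K2 - 4*b*SKQ - 2*b*K1 - 2*a*b*K1 + 2*b^2*SQ - b^3 + 2*b^3 - b^3 + b^3 := by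
    have expand : T = ∑ k ∈ Finset.range b, (4*a*(k:ℤ)^2 - 4*b*((k:ℤ)*(Q k:ℤ))
        - 2*b*(k:ℤ) - 2*a*b*(k:ℤ) + 2*b^2*(Q k:ℤ) + b^2) := by
      rw [hT]
      exact Finset.sum_congr rfl (fun k _ => by rw [fA3 k]; ring)
    rw [expand]
    simp only [Finset.sum_add_distrib, Finset.sum_sub_distrib, ← Finset.mul_sum,
      Finset.sum_const, Finset.card_range, nsmul_eq_mul]
    simp only [← hK1, ← hK2, ← hSKQ, ← hSQ]
    ring
  have fmain : 3*(a:ℤ)*T = b*(((a:ℤ)^2+1)*(b-1)*(2*b-1) - 3*a*b*(b-1) - 6*b*SQ2) + 3*a*b^2 := by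
    linear_combination (3*(a:ℤ))*fc5 + 6*fc4 + 6*(a:ℤ)*(b:ℤ)*fc3 + ((a:ℤ)^2+1)*fc2
      - 6*(a:ℤ)*(b:ℤ)*fc1
  -- to ℚ
  have hGT : (T:ℚ) = 4*(b:ℚ)^2 * ∑ k ∈ Finset.range b, G k := by
    rw [hT, Finset.mul_sum]
    push_cast
    exact Finset.sum_congr rfl (fun k _ => by simp only [hGdef]; field_simp; ring)
  have hQcast : ((SQ2:ℤ):ℚ) = ∑ k ∈ Finset.range b, (((k * a / b : ℕ)):ℚ)^2 := by
    rw [hSQ2]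
    push_cast [hQdef]
    rfl
  have fmainQ0 := congrArg (fun z : ℤ => (z:ℚ)) fmain
  push_cast at fmainQ0
  rw [hQcast, hGT] at fmainQ0
  rw [hsum]
  apply mul_left_cancel₀ hbne
  linear_combination fmainQ0

lemma sumR_pow (a b j : ℕ) (hb : 1 < b) (h : Nat.Coprime a b) :
    ∑ k ∈ Finset.range b, ((k * a % b : ℕ) : ℤ)^j = ∑ k ∈ Finset.range b, (k:ℤ)^j := by
  simpa using sum_mulMod (fun m => ((m % b : ℕ) : ℤ)^j) a b hb h |>.trans
    (Finset.sum_congr rfl (fun k hk => by rw [Nat.mod_eq_of_lt (Finset.mem_range.mp hk)]))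

lemma sumQ (a b : ℕ) (hb : 1 < b) (h : Nat.Coprime a b) :
    2 * ∑ k ∈ Finset.range b, ((k * a / b : ℕ) : ℤ) = ((a:ℤ) - 1) * ((b:ℤ) - 1) := by
  have hbne : (b:ℤ) ≠ 0 := by exact_mod_cast (by omega : b ≠ 0)
  have fA1 : ∑ k ∈ Finset.range b, ((k * a % b : ℕ) : ℤ) = ∑ k ∈ Finset.range b, (k:ℤ) := by
    have := sumR_pow a b 1 hb h
    simpa using this
  have fA3 : ∀ k : ℕ, ((k * a % b : ℕ) : ℤ) = k*a - b * ((k * a / b : ℕ) : ℤ) := by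
    intro k
    have h2 : (b:ℤ) * ((k*a/b : ℕ) : ℤ) + ((k*a % b : ℕ) : ℤ) = ((k*a : ℕ) : ℤ) := by
      exact_mod_cast congrArg (Nat.cast : ℕ → ℤ) (Nat.div_add_mod (k*a) b)
    push_cast at h2 ⊢
    linarith
  have fc1 : 2 * ∑ k ∈ Finset.range b, (k:ℤ) = b * (b - 1) := sum_range_id' b
  have e1 : ∑ k ∈ Finset.range b, (k:ℤ)
      = a * (∑ k ∈ Finset.range b, (k:ℤ)) - b * ∑ k ∈ Finset.range b, ((k * a / b : ℕ) : ℤ) := by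
    conv_lhs => rw [← fA1, Finset.sum_congr rfl (fun k _ => fA3 k)]
    rw [Finset.sum_sub_distrib, ← Finset.mul_sum, ← Finset.sum_mul]
    ring
  apply mul_left_cancel₀ hbne
  linear_combination ((a:ℤ)-1)*fc1 + 2*e1

lemma parityNQ (a b : ℕ) :
    (2:ℤ) ∣ (∑ k ∈ Finset.range b, ((k * a / b : ℕ) : ℤ)^2
      - ∑ k ∈ Finset.range b, ((k * a / b : ℕ) : ℤ)) := by
  rw [← Finset.sum_sub_distrib]
  apply Finset.dvd_sum
  intro k _
  have : Even (((k * a / b : ℕ) : ℤ) * (((k * a / b : ℕ) : ℤ) - 1)) :=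
    Int.even_mul_pred_self _
  obtain ⟨m, hm⟩ := this
  exact ⟨m, by linear_combination hm⟩

lemma dedekind_congr (a₁ a₂ b : ℕ) (hb : 0 < b) (h : a₁ ≡ a₂ [MOD b]) :
    dedekindSum a₁ b = dedekindSum a₂ b := by
  unfold dedekindSum
  refine Finset.sum_congr rfl (fun k _ => ?_)
  congr 1
  have hc1 : ((k:ℚ) * a₁) = ((k*a₁ : ℕ):ℚ) := by push_cast; ring
  have hc2 : ((k:ℚ) * a₂) = ((k*a₂ : ℕ):ℚ) := by push_cast; ring
  rw [hc1, hc2]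
  exact saw_natCongr b (k*a₁) (k*a₂) hb (Nat.ModEq.mul_left k h)

lemma dedekind_inv (a₁ a₂ b : ℕ) (hb : 1 < b) (h₁ : Nat.Coprime a₁ b)
    (h : a₁ * a₂ ≡ 1 [MOD b]) : dedekindSum a₂ b = dedekindSum a₁ b := by
  have hb0 : 0 < b := by omega
  have key := sum_mulMod (fun m => saw ((m:ℚ)/b) * saw (((m * a₂ : ℕ):ℚ)/b)) a₁ b hb h₁
  calc dedekindSum a₂ b
      = ∑ k ∈ Finset.range b, saw ((k:ℚ)/b) * saw (((k * a₂ : ℕ):ℚ)/b) := by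
        unfold dedekindSum
        refine Finset.sum_congr rfl (fun k _ => ?_)
        congr 2
        push_cast; ring
    _ = ∑ k ∈ Finset.range b, saw (((k*a₁%b : ℕ):ℚ)/b) * saw (((k*a₁%b * a₂ : ℕ):ℚ)/b) :=
        key.symm
    _ = ∑ k ∈ Finset.range b, saw ((k:ℚ)/b) * saw (((k * a₁ : ℕ):ℚ)/b) := by
        refine Finset.sum_congr rfl (fun k _ => ?_)
        rw [mul_comm (saw ((k:ℚ)/b))]
        congr 1
        · exact (saw_natMod b (k*a₁) hb0).symm
        · have hcong : k*a₁%b * a₂ ≡ k [MOD b] := by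
            calc k*a₁%b * a₂ ≡ k*a₁ * a₂ [MOD b] :=
                  Nat.ModEq.mul_right a₂ (Nat.mod_modEq _ _)
            _ = k * (a₁ * a₂) := by ring
            _ ≡ k * 1 [MOD b] := Nat.ModEq.mul_left k h
            _ = k := by ring
          exact saw_natCongr b _ _ hb0 hcong
    _ = dedekindSum a₁ b := by
        unfold dedekindSum
        refine Finset.sum_congr rfl (fun k _ => ?_)
        congr 2
        push_cast; ring

set_option maxHeartbeats 2000000 in
lemma claim1 : ∀ x y q : ZMod 8,
    (2*y+1)*(((2*x+1)^2+1)*((2*(2*q+1))-1)*(2*(2*(2*q+1))-1)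
        - 3*(2*x+1)*(2*(2*q+1))*((2*(2*q+1))-1)
        - 3*(2*(2*q+1))*((2*x+1)-1)*((2*(2*q+1))-1))
      - (2*x+1)*(((2*y+1)^2+1)*((2*(2*q+1))-1)*(2*(2*(2*q+1))-1)
        - 3*(2*y+1)*(2*(2*q+1))*((2*(2*q+1))-1)
        - 3*(2*(2*q+1))*((2*y+1)-1)*((2*(2*q+1))-1)) = 0
    → 4*((2*x+1) - (2*y+1)) = 0 := by decide

lemma twoadic1 (a₁ a₂ p b t₁ t₂ s : ℕ) (m : ℤ)
    (ht₁ : a₁ = 2*t₁+1) (ht₂ : a₂ = 2*t₂+1) (hs : p = 2*s+1) (hb : b = 2^1*p)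
    (hE : (a₂:ℤ)*(((a₁:ℤ)^2+1)*((b:ℤ)-1)*(2*(b:ℤ)-1) - 3*(a₁:ℤ)*(b:ℤ)*((b:ℤ)-1)
            - 3*(b:ℤ)*((a₁:ℤ)-1)*((b:ℤ)-1))
        - (a₁:ℤ)*(((a₂:ℤ)^2+1)*((b:ℤ)-1)*(2*(b:ℤ)-1) - 3*(a₂:ℤ)*(b:ℤ)*((b:ℤ)-1)
            - 3*(b:ℤ)*((a₂:ℤ)-1)*((b:ℤ)-1))
        = 12*(b:ℤ)*m) :
    ((2:ℤ)^1) ∣ ((a₁:ℤ) - (a₂:ℤ)) := by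
  have h0 : ((12*(b:ℤ)*m : ℤ) : ZMod 8) = 0 := by
    apply (ZMod.intCast_zmod_eq_zero_iff_dvd _ _).mpr
    rw [hb]
    exact ⟨3*p*m, by push_cast; ring⟩
  have e2 := congrArg (Int.cast : ℤ → ZMod 8) hE
  rw [h0] at e2
  push_cast at e2
  rw [ht₁, ht₂, hb, hs] at e2
  push_cast at e2
  have hc := claim1 (t₁ : ZMod 8) (t₂ : ZMod 8) (s : ZMod 8)
    (by linear_combination e2)
  have hfin : ((4*((a₁:ℤ) - (a₂:ℤ)) : ℤ) : ZMod 8) = 0 := by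
    push_cast
    rw [ht₁, ht₂]
    push_cast
    linear_combination hc
  have hdvd : (8:ℤ) ∣ 4*((a₁:ℤ) - (a₂:ℤ)) :=
    (ZMod.intCast_zmod_eq_zero_iff_dvd _ 8).mp hfin
  have h4 : (4:ℤ)*(2^1) ∣ 4*((a₁:ℤ) - (a₂:ℤ)) := by norm_num at hdvd ⊢; exact hdvd
  exact (mul_dvd_mul_iff_left (by norm_num : (4:ℤ) ≠ 0)).mp h4


set_option maxHeartbeats 2000000 in
lemma claim2 : ∀ x y q : ZMod 16,
    (2*y+1)*(((2*x+1)^2+1)*((4*(2*q+1))-1)*(2*(4*(2*q+1))-1)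
        - 3*(2*x+1)*(4*(2*q+1))*((4*(2*q+1))-1)
        - 3*(4*(2*q+1))*((2*x+1)-1)*((4*(2*q+1))-1))
      - (2*x+1)*(((2*y+1)^2+1)*((4*(2*q+1))-1)*(2*(4*(2*q+1))-1)
        - 3*(2*y+1)*(4*(2*q+1))*((4*(2*q+1))-1)
        - 3*(4*(2*q+1))*((2*y+1)-1)*((4*(2*q+1))-1)) = 0
    → 4*((2*x+1) - (2*y+1)) = 0 := by decide

lemma twoadic2 (a₁ a₂ p b t₁ t₂ s : ℕ) (m : ℤ)
    (ht₁ : a₁ = 2*t₁+1) (ht₂ : a₂ = 2*t₂+1) (hs : p = 2*s+1) (hb : b = 2^2*p)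
    (hE : (a₂:ℤ)*(((a₁:ℤ)^2+1)*((b:ℤ)-1)*(2*(b:ℤ)-1) - 3*(a₁:ℤ)*(b:ℤ)*((b:ℤ)-1)
            - 3*(b:ℤ)*((a₁:ℤ)-1)*((b:ℤ)-1))
        - (a₁:ℤ)*(((a₂:ℤ)^2+1)*((b:ℤ)-1)*(2*(b:ℤ)-1) - 3*(a₂:ℤ)*(b:ℤ)*((b:ℤ)-1)
            - 3*(b:ℤ)*((a₂:ℤ)-1)*((b:ℤ)-1))
        = 12*(b:ℤ)*m) :
    ((2:ℤ)^2) ∣ ((a₁:ℤ) - (a₂:ℤ)) := by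
  have h0 : ((12*(b:ℤ)*m : ℤ) : ZMod 16) = 0 := by
    apply (ZMod.intCast_zmod_eq_zero_iff_dvd _ _).mpr
    rw [hb]
    exact ⟨3*p*m, by push_cast; ring⟩
  have e2 := congrArg (Int.cast : ℤ → ZMod 16) hE
  rw [h0] at e2
  push_cast at e2
  rw [ht₁, ht₂, hb, hs] at e2
  push_cast at e2
  have hc := claim2 (t₁ : ZMod 16) (t₂ : ZMod 16) (s : ZMod 16)
    (by linear_combination e2)
  have hfin : ((4*((a₁:ℤ) - (a₂:ℤ)) : ℤ) : ZMod 16) = 0 := by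
    push_cast
    rw [ht₁, ht₂]
    push_cast
    linear_combination hc
  have hdvd : (16:ℤ) ∣ 4*((a₁:ℤ) - (a₂:ℤ)) :=
    (ZMod.intCast_zmod_eq_zero_iff_dvd _ 16).mp hfin
  have h4 : (4:ℤ)*(2^2) ∣ 4*((a₁:ℤ) - (a₂:ℤ)) := by norm_num at hdvd ⊢; exact hdvd
  exact (mul_dvd_mul_iff_left (by norm_num : (4:ℤ) ≠ 0)).mp h4


set_option maxHeartbeats 2000000 in
lemma claim3 : ∀ x y q : ZMod 32,
    (2*y+1)*(((2*x+1)^2+1)*((8*(2*q+1))-1)*(2*(8*(2*q+1))-1)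
        - 3*(2*x+1)*(8*(2*q+1))*((8*(2*q+1))-1)
        - 3*(8*(2*q+1))*((2*x+1)-1)*((8*(2*q+1))-1))
      - (2*x+1)*(((2*y+1)^2+1)*((8*(2*q+1))-1)*(2*(8*(2*q+1))-1)
        - 3*(2*y+1)*(8*(2*q+1))*((8*(2*q+1))-1)
        - 3*(8*(2*q+1))*((2*y+1)-1)*((8*(2*q+1))-1)) = 0
    → 4*((2*x+1) - (2*y+1)) = 0 := by decide

lemma twoadic3 (a₁ a₂ p b t₁ t₂ s : ℕ) (m : ℤ)
    (ht₁ : a₁ = 2*t₁+1) (ht₂ : a₂ = 2*t₂+1) (hs : p = 2*s+1) (hb : b = 2^3*p)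
    (hE : (a₂:ℤ)*(((a₁:ℤ)^2+1)*((b:ℤ)-1)*(2*(b:ℤ)-1) - 3*(a₁:ℤ)*(b:ℤ)*((b:ℤ)-1)
            - 3*(b:ℤ)*((a₁:ℤ)-1)*((b:ℤ)-1))
        - (a₁:ℤ)*(((a₂:ℤ)^2+1)*((b:ℤ)-1)*(2*(b:ℤ)-1) - 3*(a₂:ℤ)*(b:ℤ)*((b:ℤ)-1)
            - 3*(b:ℤ)*((a₂:ℤ)-1)*((b:ℤ)-1))
        = 12*(b:ℤ)*m) :
    ((2:ℤ)^3) ∣ ((a₁:ℤ) - (a₂:ℤ)) := by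
  have h0 : ((12*(b:ℤ)*m : ℤ) : ZMod 32) = 0 := by
    apply (ZMod.intCast_zmod_eq_zero_iff_dvd _ _).mpr
    rw [hb]
    exact ⟨3*p*m, by push_cast; ring⟩
  have e2 := congrArg (Int.cast : ℤ → ZMod 32) hE
  rw [h0] at e2
  push_cast at e2
  rw [ht₁, ht₂, hb, hs] at e2
  push_cast at e2
  have hc := claim3 (t₁ : ZMod 32) (t₂ : ZMod 32) (s : ZMod 32)
    (by linear_combination e2)
  have hfin : ((4*((a₁:ℤ) - (a₂:ℤ)) : ℤ) : ZMod 32) = 0 := by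
    push_cast
    rw [ht₁, ht₂]
    push_cast
    linear_combination hc
  have hdvd : (32:ℤ) ∣ 4*((a₁:ℤ) - (a₂:ℤ)) :=
    (ZMod.intCast_zmod_eq_zero_iff_dvd _ 32).mp hfin
  have h4 : (4:ℤ)*(2^3) ∣ 4*((a₁:ℤ) - (a₂:ℤ)) := by norm_num at hdvd ⊢; exact hdvd
  exact (mul_dvd_mul_iff_left (by norm_num : (4:ℤ) ≠ 0)).mp h4

lemma odd_sq_sub_one (a t : ℕ) (h : a = 2*t+1) : (8:ℤ) ∣ (a:ℤ)^2 - 1 := by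
  obtain ⟨m, hm⟩ := Int.even_mul_succ_self (t:ℤ)
  exact ⟨m, by rw [h]; push_cast; linear_combination 4*hm⟩

lemma twoadicAll (e a₁ a₂ p b t₁ t₂ s : ℕ) (m : ℤ) (he : e = 1 ∨ e = 2 ∨ e = 3)
    (ht₁ : a₁ = 2*t₁+1) (ht₂ : a₂ = 2*t₂+1) (hs : p = 2*s+1) (hb : b = 2^e*p)
    (hE : (a₂:ℤ)*(((a₁:ℤ)^2+1)*((b:ℤ)-1)*(2*(b:ℤ)-1) - 3*(a₁:ℤ)*(b:ℤ)*((b:ℤ)-1)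
            - 3*(b:ℤ)*((a₁:ℤ)-1)*((b:ℤ)-1))
        - (a₁:ℤ)*(((a₂:ℤ)^2+1)*((b:ℤ)-1)*(2*(b:ℤ)-1) - 3*(a₂:ℤ)*(b:ℤ)*((b:ℤ)-1)
            - 3*(b:ℤ)*((a₂:ℤ)-1)*((b:ℤ)-1))
        = 12*(b:ℤ)*m) :
    ((2:ℤ)^e) ∣ ((a₁:ℤ) - (a₂:ℤ)) := by
  rcases he with h|h|h <;> subst h
  · exact twoadic1 a₁ a₂ p b t₁ t₂ s m ht₁ ht₂ hs hb hE
  · exact twoadic2 a₁ a₂ p b t₁ t₂ s m ht₁ ht₂ hs hb hE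
  · exact twoadic3 a₁ a₂ p b t₁ t₂ s m ht₁ ht₂ hs hb hE

theorem dedekind_equal_iff (e p b a₁ a₂ : ℕ) (he : e ∈ ({0, 1, 2, 3} : Set ℕ))
    (hp : p.Prime) (hpodd : Odd p) (hb : b = 2 ^ e * p)
    (ha₁ : 0 < a₁) (ha₂ : 0 < a₂) (h₁ : Nat.Coprime a₁ b) (h₂ : Nat.Coprime a₂ b) :
    dedekindSum a₁ b = dedekindSum a₂ b ↔ (a₁ ≡ a₂ [MOD b] ∨ a₁ * a₂ ≡ 1 [MOD b]) := by
  have hsplit : e = 0 ∨ e = 1 ∨ e = 2 ∨ e = 3 := by simpa using he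
  have hp3 : 3 ≤ p := by
    obtain ⟨k, hk⟩ := hpodd
    have := hp.two_le
    omega
  have h2e : 0 < 2^e := Nat.pow_pos (by omega)
  have hb1 : 1 < b := by
    rw [hb]
    calc 1 < 1 * 3 := by omega
    _ ≤ 2^e * p := Nat.mul_le_mul h2e hp3
  have hodd : ∀ a : ℕ, 0 < e → Nat.Coprime a b → a % 2 = 1 := by
    intro a hepos hcop
    have h2b : 2 ∣ b := by
      rw [hb]; exact Dvd.dvd.mul_right (dvd_pow_self 2 (by omega)) p
    rcases Nat.mod_two_eq_zero_or_one a with h0 | h0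
    · exfalso
      have : 2 ∣ Nat.gcd a b := Nat.dvd_gcd (Nat.dvd_of_mod_eq_zero h0) h2b
      rw [hcop] at this
      omega
    · exact h0
  constructor
  · -- forward
    intro heq
    set N₁ : ℤ := ∑ k ∈ Finset.range b, ((k * a₁ / b : ℕ) : ℤ)^2 with hN₁
    set N₂ : ℤ := ∑ k ∈ Finset.range b, ((k * a₂ / b : ℕ) : ℤ)^2 with hN₂
    have hNcast₁ : ((N₁:ℤ):ℚ) = ∑ k ∈ Finset.range b, (((k * a₁ / b : ℕ)):ℚ)^2 := by
      rw [hN₁]; push_cast; rfl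
    have hNcast₂ : ((N₂:ℤ):ℚ) = ∑ k ∈ Finset.range b, (((k * a₂ / b : ℕ)):ℚ)^2 := by
      rw [hN₂]; push_cast; rfl
    have m1 := master a₁ b hb1 h₁
    have m2 := master a₂ b hb1 h₂
    rw [← hNcast₁] at m1
    rw [← hNcast₂] at m2
    have h12 : (a₂:ℚ) * (12*a₁*b*dedekindSum a₁ b) = a₁*(12*a₂*b*dedekindSum a₂ b) := by
      rw [heq]; ring
    rw [m1, m2] at h12
    have eZ : (a₂:ℤ) * (((a₁:ℤ)^2+1)*((b:ℤ)-1)*(2*(b:ℤ)-1) - 3*a₁*b*((b:ℤ)-1) - 6*b*N₁)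
        = (a₁:ℤ) * (((a₂:ℤ)^2+1)*((b:ℤ)-1)*(2*(b:ℤ)-1) - 3*a₂*b*((b:ℤ)-1) - 6*b*N₂) := by
      exact_mod_cast h12
    -- mod p
    haveI : Fact p.Prime := Fact.mk hp
    have ep := congrArg (Int.cast : ℤ → ZMod p) eZ
    push_cast at ep
    have hbp : ((b:ℕ) : ZMod p) = 0 := by
      rw [hb]; push_cast; simp [ZMod.natCast_self]
    rw [hbp] at ep
    have key : ((a₁:ZMod p) - a₂) * ((a₁:ZMod p)*a₂ - 1) = 0 := by
      linear_combination ep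
    -- two-adic part
    obtain ⟨c₁, hc₁⟩ := parityNQ a₁ b
    obtain ⟨c₂, hc₂⟩ := parityNQ a₂ b
    have hq₁ := sumQ a₁ b hb1 h₁
    have hq₂ := sumQ a₂ b hb1 h₂
    rw [← hN₁] at hc₁
    rw [← hN₂] at hc₂
    have hE : (a₂:ℤ)*(((a₁:ℤ)^2+1)*((b:ℤ)-1)*(2*(b:ℤ)-1) - 3*(a₁:ℤ)*(b:ℤ)*((b:ℤ)-1)
            - 3*(b:ℤ)*((a₁:ℤ)-1)*((b:ℤ)-1))
        - (a₁:ℤ)*(((a₂:ℤ)^2+1)*((b:ℤ)-1)*(2*(b:ℤ)-1) - 3*(a₂:ℤ)*(b:ℤ)*((b:ℤ)-1)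
            - 3*(b:ℤ)*((a₂:ℤ)-1)*((b:ℤ)-1))
        = 12*(b:ℤ)*((a₂:ℤ)*c₁ - (a₁:ℤ)*c₂) := by
      linear_combination eZ + 6*(b:ℤ)*(a₂:ℤ)*hc₁ - 6*(b:ℤ)*(a₁:ℤ)*hc₂
        + 3*(b:ℤ)*(a₂:ℤ)*hq₁ - 3*(b:ℤ)*(a₁:ℤ)*hq₂
    have h2dvd : ((2:ℤ)^e) ∣ ((a₁:ℤ) - (a₂:ℤ)) := by
      rcases hsplit with he0 | hee
      · rw [he0]; simpa using one_dvd _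
      · have hepos : 0 < e := by omega
        have hodd₁ := hodd a₁ hepos h₁
        have hodd₂ := hodd a₂ hepos h₂
        obtain ⟨s, hs⟩ : ∃ s, p = 2*s+1 := ⟨p/2, by obtain ⟨k,hk⟩ := hpodd; omega⟩
        exact twoadicAll e a₁ a₂ p b (a₁/2) (a₂/2) s _ hee
          (by omega) (by omega) hs hb hE
    have hcop : Nat.Coprime (2^e) p :=
      Nat.Coprime.pow_left e ((Nat.coprime_two_left).mpr hpodd)
    have he3 : e ≤ 3 := by omega
    rcases mul_eq_zero.mp key with hcase | hcase
    · left
      have hmp : a₁ ≡ a₂ [MOD p] :=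
        (ZMod.natCast_eq_natCast_iff _ _ _).mp (sub_eq_zero.mp hcase)
      have hm2 : a₁ ≡ a₂ [MOD 2^e] := by
        rw [Nat.modEq_iff_dvd]
        push_cast
        exact (dvd_sub_comm).mp (by exact_mod_cast h2dvd)
      rw [hb]
      exact (Nat.modEq_and_modEq_iff_modEq_mul hcop).mp ⟨hm2, hmp⟩
    · right
      have hmp : a₁ * a₂ ≡ 1 [MOD p] := by
        have : ((a₁ * a₂ : ℕ) : ZMod p) = ((1:ℕ) : ZMod p) := by
          push_cast
          linear_combination hcase
        exact (ZMod.natCast_eq_natCast_iff _ _ _).mp this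
      have hm2 : a₁ * a₂ ≡ 1 [MOD 2^e] := by
        rcases Nat.eq_zero_or_pos e with he0 | hepos
        · rw [he0]; simp [Nat.modEq_one]
        · have hodd₁ := hodd a₁ hepos h₁
          have h8 : (8:ℤ) ∣ (a₁:ℤ)^2 - 1 := odd_sq_sub_one a₁ (a₁/2) (by omega)
          have h23 : ((2:ℤ)^e) ∣ ((2:ℤ)^3) := pow_dvd_pow 2 he3
          have hsq : ((2:ℤ)^e) ∣ (a₁:ℤ)^2 - 1 := h23.trans (by norm_num [h8])
          have hdv : ((2:ℤ)^e) ∣ ((a₁:ℤ)*(a₂:ℤ) - 1) := by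
            have hrw : (a₁:ℤ)*(a₂:ℤ) - 1 = (a₁:ℤ)*((a₂:ℤ) - (a₁:ℤ)) + ((a₁:ℤ)^2 - 1) := by
              ring
            rw [hrw]
            exact dvd_add (Dvd.dvd.mul_left ((dvd_sub_comm).mp h2dvd) _) hsq
          rw [Nat.modEq_iff_dvd]
          push_cast
          exact (dvd_sub_comm).mp hdv
      rw [hb]
      exact (Nat.modEq_and_modEq_iff_modEq_mul hcop).mp ⟨hm2, hmp⟩
  · -- reverse
    rintro (h | h)
    · exact dedekind_congr a₁ a₂ b (by omega) h
    · exact dedekind_inv a₂ a₁ b hb1 h₂ (by rwa [mul_comm] at h)
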